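/- In the random-connectivity shard graph where each node gets d random outbound edges and all n shards are disjoint of equal size |S₁|, with d² ≤ C·n^{1/2}, the expected retraining cost upon forgetting a sample x ∈ S₁ satisfies E|M_x| = O(|S₁|·d²); specifically E|M_x| ≤ |S₁|(d+1)². -/

import Mathlib

private lemma aux_filter_powersetCard {β : Type*} [DecidableEq β] {U : Finset β} {a : β}
    (ha : a ∈ U) (k : ℕ) :
    ((Finset.powersetCard (k+1) U).filter (fun A => a ∈ A)).card
      = ((U.erase a).card).choose k := by
  have h1 : (Finset.powersetCard (k+1) U).filter (fun A => a ∈ A)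
      = (Finset.powersetCard k (U.erase a)).image (insert a) := by
    conv_lhs => rw [← Finset.insert_erase ha,
      Finset.powersetCard_succ_insert (Finset.notMem_erase a U)]
    rw [Finset.filter_union]
    have h2 : (Finset.powersetCard (k+1) (U.erase a)).filter (fun A => a ∈ A) = ∅ := by
      rw [Finset.filter_eq_empty_iff]
      intro A hA haA
      exact Finset.notMem_erase a U ((Finset.mem_powersetCard.1 hA).1 haA)
    have h3 : ((Finset.powersetCard k (U.erase a)).image (insert a)).filter (fun A => a ∈ A)
        = (Finset.powersetCard k (U.erase a)).image (insert a) := by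
      apply Finset.filter_true_of_mem
      intro A hA
      obtain ⟨B, _, rfl⟩ := Finset.mem_image.1 hA
      exact Finset.mem_insert_self a B
    rw [h2, h3, Finset.empty_union]
  rw [h1, Finset.card_image_of_injOn, Finset.card_powersetCard]
  intro A hA B hB hAB
  have hA' : a ∉ A := fun h => Finset.notMem_erase a U ((Finset.mem_powersetCard.1 hA).1 h)
  have hB' : a ∉ B := fun h => Finset.notMem_erase a U ((Finset.mem_powersetCard.1 hB).1 h)
  rw [← Finset.erase_insert hA', ← Finset.erase_insert hB', hAB]

private lemma aux_card_Tj {n d : ℕ} (j : Fin n) :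
    Fintype.card {A : Finset (Fin n) // A.card = d ∧ j ∉ A} = (n - 1).choose d := by
  rw [Fintype.card_subtype]
  have : (Finset.univ.filter fun A : Finset (Fin n) => A.card = d ∧ j ∉ A)
      = Finset.powersetCard d (Finset.univ.erase j) := by
    ext A
    simp [Finset.mem_powersetCard, Finset.subset_erase, and_comm]
  rw [this, Finset.card_powersetCard, Finset.card_erase_of_mem (Finset.mem_univ j),
    Finset.card_univ, Fintype.card_fin]

private lemma aux_card_Tj_mem {n d : ℕ} (j i₀ : Fin n) (hne : i₀ ≠ j) :
    Fintype.card {a : {A : Finset (Fin n) // A.card = d ∧ j ∉ A} // i₀ ∈ a.1} * (n - 1)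
      = d * (n - 1).choose d := by
  rw [Fintype.card_congr (Equiv.subtypeSubtypeEquivSubtypeInter
      (fun A : Finset (Fin n) => A.card = d ∧ j ∉ A) (fun A => i₀ ∈ A)), Fintype.card_subtype]
  have h1 : (Finset.univ.filter fun A : Finset (Fin n) => (A.card = d ∧ j ∉ A) ∧ i₀ ∈ A)
      = (Finset.powersetCard d (Finset.univ.erase j)).filter (fun A => i₀ ∈ A) := by
    ext A
    simp [Finset.mem_powersetCard, Finset.subset_erase, and_comm, and_assoc]
  rw [h1]
  rcases d with _ | k
  · have : (Finset.powersetCard 0 (Finset.univ.erase j)).filter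
        (fun A : Finset (Fin n) => i₀ ∈ A) = ∅ := by
      rw [Finset.filter_eq_empty_iff]
      intro A hA
      simp only [Finset.mem_powersetCard, Finset.card_eq_zero] at hA
      rw [hA.2]
      simp
    rw [this]
    simp
  · rw [aux_filter_powersetCard (by simp [Finset.mem_erase, hne]) k]
    rw [Finset.card_erase_of_mem (by simp [Finset.mem_erase, hne]),
      Finset.card_erase_of_mem (Finset.mem_univ j), Finset.card_univ, Fintype.card_fin]
    have hn2 : 2 ≤ n := by
      rcases Nat.lt_or_ge n 2 with h | h
      · interval_cases n
        · exact j.elim0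
        · exact absurd (Subsingleton.elim i₀ j) hne
      · exact h
    have h3 : n - 1 - 1 + 1 = n - 1 := by omega
    have := Nat.add_one_mul_choose_eq (n - 1 - 1) k
    rw [h3] at this
    rw [mul_comm, this]
    exact mul_comm _ _

private lemma aux_count {n d : ℕ} (j i₀ : Fin n) (hne : i₀ ≠ j) :
    (Finset.univ.filter fun ω : {E : Fin n → Finset (Fin n) // ∀ i, (E i).card = d ∧ i ∉ E i} =>
      i₀ ∈ ω.1 j).card * (n - 1)
    = d * Fintype.card {E : Fin n → Finset (Fin n) // ∀ i, (E i).card = d ∧ i ∉ E i} := by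
  classical
  set T : Fin n → Type _ := fun i => {A : Finset (Fin n) // A.card = d ∧ i ∉ A} with hT
  let e : {E : Fin n → Finset (Fin n) // ∀ i, (E i).card = d ∧ i ∉ E i} ≃ (∀ i, T i) :=
  { toFun := fun E i => ⟨E.1 i, E.2 i⟩
    invFun := fun f => ⟨fun i => (f i).1, fun i => (f i).2⟩
    left_inv := fun E => rfl
    right_inv := fun f => rfl }
  let φ := Equiv.piSplitAt j T
  rw [← Fintype.card_subtype]
  have e2 : {ω : {E : Fin n → Finset (Fin n) // ∀ i, (E i).card = d ∧ i ∉ E i} // i₀ ∈ ω.1 j}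
      ≃ {a : T j // i₀ ∈ a.1} × (∀ i : {i // i ≠ j}, T i) :=
    (e.subtypeEquiv (q := fun f => i₀ ∈ (f j).1) (fun E => Iff.rfl)).trans
      ((φ.subtypeEquiv (q := fun x => i₀ ∈ x.1.1) (fun f => Iff.rfl)).trans
        (Equiv.prodSubtypeFstEquivSubtypeProd (p := fun a : T j => i₀ ∈ a.1)))
  rw [Fintype.card_congr e2, Fintype.card_prod,
    Fintype.card_congr (e.trans φ), Fintype.card_prod, aux_card_Tj j,
    mul_right_comm, aux_card_Tj_mem j i₀ hne]
  ring

/-- Upper bound on the expected retraining cost in the random-connectivity shard graph: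
each node independently chooses `d` outbound edges uniformly among the other nodes (plus
its self-loop); shards are pairwise disjoint of equal size `s`.  The expected size of
`M_x = ⋃_{j ∈ N_in(i₀)} ⋃_{v ∈ N_out(j)} v \ {x}` (uniform average over all admissible
edge assignments) is at most `s * (d+1)^2 = O(s d²)`. -/
theorem stmt2 {α : Type*} [DecidableEq α] (n d s : ℕ) (hn : 0 < n) (hd : d ≤ n - 1)
    (C : ℝ) (hC : 0 < C) (hCd : (d : ℝ) ^ 2 ≤ C * (n : ℝ) ^ ((1 : ℝ) / 2))
    (S : Fin n → Finset α)
    (hdisj : ∀ i j : Fin n, i ≠ j → Disjoint (S i) (S j))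
    (hcard : ∀ i, (S i).card = s)
    (i₀ : Fin n) (x : α) (hx : x ∈ S i₀) :
    (∑ ω : {E : Fin n → Finset (Fin n) // ∀ i, (E i).card = d ∧ i ∉ E i},
        ((((Finset.univ.filter fun j => i₀ ∈ insert j (ω.1 j)).biUnion fun j =>
            (insert j (ω.1 j)).biUnion S).erase x).card : ℝ)) /
      (Fintype.card {E : Fin n → Finset (Fin n) // ∀ i, (E i).card = d ∧ i ∉ E i}) ≤
      (s : ℝ) * ((d : ℝ) + 1) ^ 2 := by
  classical
  set K := Fintype.card {E : Fin n → Finset (Fin n) // ∀ i, (E i).card = d ∧ i ∉ E i} with hK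
  -- nonemptiness
  have hcard_le : ∀ i : Fin n, d ≤ (Finset.univ.erase i).card := by
    intro i
    rw [Finset.card_erase_of_mem (Finset.mem_univ i), Finset.card_univ, Fintype.card_fin]
    exact hd
  have hNE : Nonempty {E : Fin n → Finset (Fin n) // ∀ i, (E i).card = d ∧ i ∉ E i} := by
    refine ⟨⟨fun i => (Finset.exists_subset_card_eq (hcard_le i)).choose,
      fun i => ?_⟩⟩
    obtain ⟨hsub, hc⟩ := (Finset.exists_subset_card_eq (hcard_le i)).choose_spec
    exact ⟨hc, fun h => (Finset.mem_erase.1 (hsub h)).1 rfl⟩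
  have hKpos : 0 < K := Fintype.card_pos_iff.mpr hNE
  have hKpos' : (0 : ℝ) < (K : ℝ) := by exact_mod_cast hKpos
  rw [div_le_iff₀ hKpos']
  -- pointwise bound
  have step1 : ∀ ω : {E : Fin n → Finset (Fin n) // ∀ i, (E i).card = d ∧ i ∉ E i},
      ((((Finset.univ.filter fun j => i₀ ∈ insert j (ω.1 j)).biUnion fun j =>
          (insert j (ω.1 j)).biUnion S).erase x).card)
      ≤ (Finset.univ.filter fun j => i₀ ∈ insert j (ω.1 j)).card * ((d + 1) * s) := by
    intro ω
    refine le_trans (Finset.card_erase_le) (le_trans Finset.card_biUnion_le ?_)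
    have hterm : ∀ j ∈ Finset.univ.filter fun j => i₀ ∈ insert j (ω.1 j),
        ((insert j (ω.1 j)).biUnion S).card ≤ (d + 1) * s := by
      intro j _
      refine le_trans Finset.card_biUnion_le ?_
      calc ∑ v ∈ insert j (ω.1 j), (S v).card = ∑ _v ∈ insert j (ω.1 j), s := by
            exact Finset.sum_congr rfl fun v _ => hcard v
        _ = (insert j (ω.1 j)).card * s := by rw [Finset.sum_const, smul_eq_mul]
        _ ≤ (d + 1) * s := by
            apply Nat.mul_le_mul_right
            calc (insert j (ω.1 j)).card ≤ (ω.1 j).card + 1 := Finset.card_insert_le _ _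
              _ = d + 1 := by rw [(ω.2 j).1]
    calc ∑ j ∈ Finset.univ.filter fun j => i₀ ∈ insert j (ω.1 j),
          ((insert j (ω.1 j)).biUnion S).card
        ≤ ∑ _j ∈ Finset.univ.filter fun j => i₀ ∈ insert j (ω.1 j), (d + 1) * s :=
          Finset.sum_le_sum hterm
      _ = (Finset.univ.filter fun j => i₀ ∈ insert j (ω.1 j)).card * ((d + 1) * s) := by
          rw [Finset.sum_const, smul_eq_mul]
  -- expectation of the in-degree sum
  have step2 : (∑ ω : {E : Fin n → Finset (Fin n) // ∀ i, (E i).card = d ∧ i ∉ E i},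
      (Finset.univ.filter fun j => i₀ ∈ insert j (ω.1 j)).card) ≤ (d + 1) * K := by
    have hrw : ∀ ω : {E : Fin n → Finset (Fin n) // ∀ i, (E i).card = d ∧ i ∉ E i},
        (Finset.univ.filter fun j => i₀ ∈ insert j (ω.1 j)).card
        = ∑ j : Fin n, if i₀ ∈ insert j (ω.1 j) then 1 else 0 := fun ω => Finset.card_filter _ _
    calc (∑ ω : {E : Fin n → Finset (Fin n) // ∀ i, (E i).card = d ∧ i ∉ E i},
          (Finset.univ.filter fun j => i₀ ∈ insert j (ω.1 j)).card)
        = ∑ j : Fin n, ∑ ω : {E : Fin n → Finset (Fin n) // ∀ i, (E i).card = d ∧ i ∉ E i},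
            (if i₀ ∈ insert j (ω.1 j) then 1 else 0) := by
          rw [← Finset.sum_comm]
          exact Finset.sum_congr rfl fun ω _ => hrw ω
      _ = ∑ j : Fin n, (Finset.univ.filter
            fun ω : {E : Fin n → Finset (Fin n) // ∀ i, (E i).card = d ∧ i ∉ E i} =>
              i₀ ∈ insert j (ω.1 j)).card :=
          Finset.sum_congr rfl fun j _ => (Finset.card_filter _ _).symm
      _ ≤ (d + 1) * K := by
          rw [← Finset.sum_erase_add _ _ (Finset.mem_univ i₀)]
          have hi₀ : (Finset.univ.filter
              fun ω : {E : Fin n → Finset (Fin n) // ∀ i, (E i).card = d ∧ i ∉ E i} =>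
                i₀ ∈ insert i₀ (ω.1 i₀)).card = K := by
            rw [Finset.filter_true_of_mem (fun ω _ => Finset.mem_insert_self _ _),
              Finset.card_univ]
          rw [hi₀]
          have hrest : (∑ j ∈ Finset.univ.erase i₀, (Finset.univ.filter
              fun ω : {E : Fin n → Finset (Fin n) // ∀ i, (E i).card = d ∧ i ∉ E i} =>
                i₀ ∈ insert j (ω.1 j)).card) ≤ d * K := by
            rcases Finset.eq_empty_or_nonempty (Finset.univ.erase i₀ : Finset (Fin n)) with h | h
            · rw [h, Finset.sum_empty]
              exact Nat.zero_le _
            · have hn2 : 2 ≤ n := by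
                obtain ⟨j, hj⟩ := h
                have := Finset.one_lt_card.2 ⟨j, Finset.mem_univ j, i₀, Finset.mem_univ i₀,
                  (Finset.mem_erase.1 hj).1⟩
                rwa [Finset.card_univ, Fintype.card_fin] at this
              have hcj : ∀ j ∈ Finset.univ.erase i₀, (Finset.univ.filter
                  fun ω : {E : Fin n → Finset (Fin n) // ∀ i, (E i).card = d ∧ i ∉ E i} =>
                    i₀ ∈ insert j (ω.1 j)).card * (n - 1) = d * K := by
                intro j hj
                have hij : i₀ ≠ j := fun h' => (Finset.mem_erase.1 hj).1 h'.symm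
                have : (Finset.univ.filter
                    fun ω : {E : Fin n → Finset (Fin n) // ∀ i, (E i).card = d ∧ i ∉ E i} =>
                      i₀ ∈ insert j (ω.1 j))
                    = (Finset.univ.filter
                    fun ω : {E : Fin n → Finset (Fin n) // ∀ i, (E i).card = d ∧ i ∉ E i} =>
                      i₀ ∈ ω.1 j) := by
                  apply Finset.filter_congr
                  intro ω _
                  simp [Finset.mem_insert, hij]
                rw [this]
                exact aux_count j i₀ hij
              have hmul : (∑ j ∈ Finset.univ.erase i₀, (Finset.univ.filter
                  fun ω : {E : Fin n → Finset (Fin n) // ∀ i, (E i).card = d ∧ i ∉ E i} =>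
                    i₀ ∈ insert j (ω.1 j)).card) * (n - 1) = (n - 1) * (d * K) := by
                rw [Finset.sum_mul]
                rw [Finset.sum_congr rfl hcj, Finset.sum_const, smul_eq_mul,
                  Finset.card_erase_of_mem (Finset.mem_univ i₀), Finset.card_univ,
                  Fintype.card_fin]
              have hpos : 0 < n - 1 := Nat.sub_pos_of_lt (lt_of_lt_of_le one_lt_two hn2)
              have := hmul
              rw [mul_comm (n - 1) (d * K)] at this
              exact le_of_eq (Nat.eq_of_mul_eq_mul_right hpos this)
          have hdk : (d + 1) * K = d * K + K := by ring
          rw [hdk]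
          exact Nat.add_le_add_right hrest K
  -- assemble
  have key : (∑ ω : {E : Fin n → Finset (Fin n) // ∀ i, (E i).card = d ∧ i ∉ E i},
      ((((Finset.univ.filter fun j => i₀ ∈ insert j (ω.1 j)).biUnion fun j =>
          (insert j (ω.1 j)).biUnion S).erase x).card))
      ≤ s * (d + 1) ^ 2 * K := by
    calc (∑ ω : {E : Fin n → Finset (Fin n) // ∀ i, (E i).card = d ∧ i ∉ E i},
          ((((Finset.univ.filter fun j => i₀ ∈ insert j (ω.1 j)).biUnion fun j =>
              (insert j (ω.1 j)).biUnion S).erase x).card))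
        ≤ ∑ ω : {E : Fin n → Finset (Fin n) // ∀ i, (E i).card = d ∧ i ∉ E i},
            (Finset.univ.filter fun j => i₀ ∈ insert j (ω.1 j)).card * ((d + 1) * s) :=
          Finset.sum_le_sum fun ω _ => step1 ω
      _ = (∑ ω : {E : Fin n → Finset (Fin n) // ∀ i, (E i).card = d ∧ i ∉ E i},
            (Finset.univ.filter fun j => i₀ ∈ insert j (ω.1 j)).card) * ((d + 1) * s) := by
          rw [Finset.sum_mul]
      _ ≤ ((d + 1) * K) * ((d + 1) * s) := Nat.mul_le_mul_right _ step2
      _ = s * (d + 1) ^ 2 * K := by ring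
  calc (∑ ω : {E : Fin n → Finset (Fin n) // ∀ i, (E i).card = d ∧ i ∉ E i},
        ((((Finset.univ.filter fun j => i₀ ∈ insert j (ω.1 j)).biUnion fun j =>
            (insert j (ω.1 j)).biUnion S).erase x).card : ℝ))
      = ((∑ ω : {E : Fin n → Finset (Fin n) // ∀ i, (E i).card = d ∧ i ∉ E i},
          ((((Finset.univ.filter fun j => i₀ ∈ insert j (ω.1 j)).biUnion fun j =>
              (insert j (ω.1 j)).biUnion S).erase x).card) : ℕ) : ℝ) := by
        push_cast
        rfl
    _ ≤ ((s * (d + 1) ^ 2 * K : ℕ) : ℝ) := by exact_mod_cast key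
    _ = (s : ℝ) * ((d : ℝ) + 1) ^ 2 * (K : ℝ) := by push_cast; ring
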